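/- Let d ≥ 1, let μ be the Haar probability measure on the unitary group U(d) = Matrix.unitaryGroup (Fin d) ℂ, let e ∈ ℂ^d be a unit vector (ℓ² norm), and write ξ_U := U *ᵥ e. Then for every Hermitian d×d complex matrix O (Oᴴ = O), ∫_{U(d)} (re⟨ξ_U, O *ᵥ ξ_U⟩)² dμ(U) = ((re Tr O)² + re Tr(O·O)) / (d·(d+1)), where ⟨v, w⟩ := ∑_i conj(v i)·(w i). -/

import Mathlib

set_option linter.unusedSectionVars false

open MeasureTheory Matrix
open scoped ComplexConjugate

/-- The standard inner product `⟨v, w⟩ = ∑ i, conj (v i) * w i` on `ℂ^d`. -/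
noncomputable def cip {d : ℕ} (v w : Fin d → ℂ) : ℂ :=
  ∑ i, (starRingEnd ℂ) (v i) * w i

namespace Stmt12Aux

variable {d : ℕ}

/-- Coordinates of the random state `ξ_U = U *ᵥ e`. -/
noncomputable def xi (e : Fin d → ℂ) (U : Matrix.unitaryGroup (Fin d) ℂ) : Fin d → ℂ :=
  (U : Matrix (Fin d) (Fin d) ℂ) *ᵥ e

lemma xi_apply (e : Fin d → ℂ) (U : Matrix.unitaryGroup (Fin d) ℂ) (k : Fin d) :
    xi e U k = ∑ j, (U : Matrix (Fin d) (Fin d) ℂ) k j * e j := rfl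

lemma continuous_xi (e : Fin d → ℂ) (k : Fin d) :
    Continuous fun U : Matrix.unitaryGroup (Fin d) ℂ => xi e U k := by
  simp only [xi_apply]
  exact continuous_finset_sum _ fun j _ =>
    Continuous.mul (f := fun U : Matrix.unitaryGroup (Fin d) ℂ => (U : Matrix (Fin d) (Fin d) ℂ) k j)
      ((continuous_apply j).comp ((continuous_apply k).comp continuous_subtype_val))
      continuous_const

lemma norm_xi_le (e : Fin d → ℂ) (U : Matrix.unitaryGroup (Fin d) ℂ) (k : Fin d) :
    ‖xi e U k‖ ≤ ∑ j, ‖e j‖ := by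
  rw [xi_apply]
  refine (norm_sum_le _ _).trans (Finset.sum_le_sum fun j _ => ?_)
  rw [norm_mul]
  calc ‖(U : Matrix (Fin d) (Fin d) ℂ) k j‖ * ‖e j‖ ≤ 1 * ‖e j‖ :=
        mul_le_mul_of_nonneg_right (entry_norm_bound_of_unitary U.2 k j) (norm_nonneg _)
    _ = ‖e j‖ := one_mul _

variable [MeasurableSpace (Matrix.unitaryGroup (Fin d) ℂ)]
  [BorelSpace (Matrix.unitaryGroup (Fin d) ℂ)]

/-- The fourth moment `∫ ξ_k ξ_l conj ξ_i conj ξ_j`. -/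
noncomputable def mmt (μ : Measure (Matrix.unitaryGroup (Fin d) ℂ)) (e : Fin d → ℂ)
    (k l i j : Fin d) : ℂ :=
  ∫ U, xi e U k * xi e U l * conj (xi e U i) * conj (xi e U j) ∂μ

variable (μ : Measure (Matrix.unitaryGroup (Fin d) ℂ))

lemma integrable_mono [IsProbabilityMeasure μ] (e : Fin d → ℂ) (k l i j : Fin d) :
    Integrable (fun U => xi e U k * xi e U l * conj (xi e U i) * conj (xi e U j)) μ := by
  set C := ∑ j, ‖e j‖ with hC
  have hC0 : 0 ≤ C := Finset.sum_nonneg fun _ _ => norm_nonneg _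
  refine Integrable.mono' (integrable_const (C ^ 4)) ?_ ?_
  · exact ((((continuous_xi e k).mul (continuous_xi e l)).mul
      (Complex.continuous_conj.comp (continuous_xi e i))).mul
      (Complex.continuous_conj.comp (continuous_xi e j))).aestronglyMeasurable
  · refine Filter.Eventually.of_forall fun U => ?_
    have h1 := norm_xi_le e U k
    have h2 := norm_xi_le e U l
    have h3 := norm_xi_le e U i
    have h4 := norm_xi_le e U j
    have : ‖xi e U k * xi e U l * conj (xi e U i) * conj (xi e U j)‖
        = ‖xi e U k‖ * ‖xi e U l‖ * ‖xi e U i‖ * ‖xi e U j‖ := by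
      simp [norm_mul]
    rw [this]
    have hk := norm_nonneg (xi e U k); have hl := norm_nonneg (xi e U l)
    have hi := norm_nonneg (xi e U i); have hj := norm_nonneg (xi e U j)
    have : C ^ 4 = C * C * C * C := by ring
    rw [this]
    exact mul_le_mul (mul_le_mul (mul_le_mul h1 h2 hl hC0) h3 hi (mul_nonneg hC0 hC0))
      h4 hj (mul_nonneg (mul_nonneg hC0 hC0) hC0)

lemma integral_comp_mulVec [μ.IsHaarMeasure] (e : Fin d → ℂ) (F : (Fin d → ℂ) → ℂ)
    (W : Matrix.unitaryGroup (Fin d) ℂ) :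
    ∫ U, F ((W : Matrix (Fin d) (Fin d) ℂ) *ᵥ xi e U) ∂μ = ∫ U, F (xi e U) ∂μ := by
  have h : ∀ U : Matrix.unitaryGroup (Fin d) ℂ,
      (W : Matrix (Fin d) (Fin d) ℂ) *ᵥ xi e U = xi e (W * U) := by
    intro U
    show (W : Matrix (Fin d) (Fin d) ℂ) *ᵥ ((U : Matrix (Fin d) (Fin d) ℂ) *ᵥ e)
        = ((W * U : Matrix.unitaryGroup (Fin d) ℂ) : Matrix (Fin d) (Fin d) ℂ) *ᵥ e
    rw [Matrix.UnitaryGroup.mul_val, ← Matrix.mulVec_mulVec]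
  simp_rw [h]
  exact integral_mul_left_eq_self (fun U => F (xi e U)) W


/-! ### Phase unitaries and the vanishing lemma -/

noncomputable def phaseM (p : Fin d) : Matrix.unitaryGroup (Fin d) ℂ :=
  ⟨Matrix.diagonal (fun r => if r = p then Complex.I else 1), by
    rw [Matrix.mem_unitaryGroup_iff]
    have hstar : star (Matrix.diagonal (fun r => if r = p then Complex.I else 1))
        = Matrix.diagonal (fun r => conj (if r = p then Complex.I else 1)) := by
      rw [Matrix.star_eq_conjTranspose, Matrix.diagonal_conjTranspose]
      rfl
    rw [hstar, Matrix.diagonal_mul_diagonal]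
    have : (fun i => (if i = p then Complex.I else 1) * conj (if i = p then Complex.I else 1))
        = fun _ : Fin d => (1 : ℂ) := by
      funext r
      by_cases h : r = p <;> simp [h, Complex.mul_conj, Complex.normSq_I]
    rw [this, Matrix.diagonal_one]⟩

lemma phaseM_mulVec (p : Fin d) (v : Fin d → ℂ) (r : Fin d) :
    ((phaseM p : Matrix (Fin d) (Fin d) ℂ) *ᵥ v) r = (if r = p then Complex.I else 1) * v r :=
  Matrix.mulVec_diagonal _ _ _

lemma mmt_phase [μ.IsHaarMeasure] (e : Fin d → ℂ) (k l i j p : Fin d) :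
    mmt μ e k l i j
      = ((if k = p then Complex.I else 1) * (if l = p then Complex.I else 1)
          * conj (if i = p then Complex.I else 1) * conj (if j = p then Complex.I else 1))
        * mmt μ e k l i j := by
  conv_lhs => rw [mmt,
    ← integral_comp_mulVec μ e (fun v => v k * v l * conj (v i) * conj (v j)) (phaseM p)]
  simp_rw [phaseM_mulVec, _root_.map_mul]
  rw [mmt, ← integral_const_mul]
  congr 1
  funext U
  ring

lemma mmt_zero [μ.IsHaarMeasure] (e : Fin d → ℂ) (k l i j : Fin d)
    (h : ¬((k = i ∧ l = j) ∨ (k = j ∧ l = i))) : mmt μ e k l i j = 0 := by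
  by_contra hm
  have key : ∀ p : Fin d,
      ((if k = p then 1 else 0) + (if l = p then 1 else 0) : ℕ)
        = (if i = p then 1 else 0) + (if j = p then 1 else 0) := by
    intro p
    have hph := mmt_phase μ e k l i j p
    have h0 : ((if k = p then Complex.I else 1) * (if l = p then Complex.I else 1)
          * conj (if i = p then Complex.I else 1) * conj (if j = p then Complex.I else 1) - 1)
        * mmt μ e k l i j = 0 := by linear_combination -hph
    have hγ : (if k = p then Complex.I else 1) * (if l = p then Complex.I else 1)
          * conj (if i = p then Complex.I else 1) * conj (if j = p then Complex.I else 1)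
        = 1 := by
      rcases mul_eq_zero.mp h0 with h1 | h2
      · linear_combination h1
      · exact absurd h2 hm
    clear hph h0
    by_cases h1 : k = p <;> by_cases h2 : l = p <;> by_cases h3 : i = p <;> by_cases h4 : j = p <;>
      simp only [h1, h2, h3, h4, eq_self_iff_true, if_true, if_false] at hγ ⊢ <;>
      first
        | rfl
        | norm_num [Complex.ext_iff] at hγ
  apply h
  by_cases hki : k = i
  · left
    refine ⟨hki, ?_⟩
    have := key l
    simp only [if_pos rfl, hki] at this
    by_cases hil : i = l <;> by_cases hjl : j = l <;> simp_all
  · right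
    have hkj : k = j := by
      have := key k
      simp only [if_pos rfl] at this
      by_cases ha : l = k <;> by_cases hb : i = k <;> by_cases hc : j = k <;> simp_all
    refine ⟨hkj, ?_⟩
    have := key l
    simp only [if_pos rfl, hkj] at this
    by_cases ha : k = l <;> by_cases hb : i = l <;> by_cases hc : j = l <;> simp_all


/-! ### Permutation unitaries -/

noncomputable def permM (σ : Equiv.Perm (Fin d)) : Matrix.unitaryGroup (Fin d) ℂ :=
  ⟨Matrix.of fun a b => if a = σ b then (1 : ℂ) else 0, by
    rw [Matrix.mem_unitaryGroup_iff]
    ext a c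
    rw [Matrix.mul_apply, Matrix.one_apply]
    have hpt : ∀ b : Fin d,
        (Matrix.of fun a b => if a = σ b then (1 : ℂ) else 0) a b
          * star ((Matrix.of fun a b => if a = σ b then (1 : ℂ) else 0)) b c
        = (fun b => (if a = b then (1:ℂ) else 0) * (if c = b then (1:ℂ) else 0)) (σ b) := by
      intro b
      simp only [Matrix.star_apply, Matrix.of_apply]
      by_cases h1 : a = σ b <;> by_cases h2 : c = σ b <;> simp [h1, h2]
    rw [Finset.sum_congr rfl fun b _ => hpt b, Equiv.sum_comp σ
      (fun b => (if a = b then (1:ℂ) else 0) * (if c = b then (1:ℂ) else 0))]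
    simp only [ite_mul, one_mul, zero_mul, Finset.sum_ite_eq, Finset.mem_univ, if_true]
    by_cases h : a = c <;> simp [h, eq_comm]⟩

lemma permM_mulVec (σ : Equiv.Perm (Fin d)) (v : Fin d → ℂ) (a : Fin d) :
    ((permM σ : Matrix (Fin d) (Fin d) ℂ) *ᵥ v) a = v (σ⁻¹ a) := by
  show ∑ b, (if a = σ b then (1:ℂ) else 0) * v b = v (σ⁻¹ a)
  rw [← Equiv.sum_comp σ⁻¹ (fun b => (if a = σ b then (1:ℂ) else 0) * v b)]
  simp only [Equiv.Perm.inv_def, Equiv.apply_symm_apply]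
  simp [ite_mul, Finset.sum_ite_eq, eq_comm]

lemma mmt_perm [μ.IsHaarMeasure] (e : Fin d → ℂ) (σ : Equiv.Perm (Fin d)) (k l i j : Fin d) :
    mmt μ e (σ k) (σ l) (σ i) (σ j) = mmt μ e k l i j := by
  have h := integral_comp_mulVec μ e
    (fun v => v (σ k) * v (σ l) * conj (v (σ i)) * conj (v (σ j))) (permM σ)
  have h2 : (∫ U, (fun v => v (σ k) * v (σ l) * conj (v (σ i)) * conj (v (σ j)))
      ((permM σ : Matrix (Fin d) (Fin d) ℂ) *ᵥ xi e U) ∂μ) = mmt μ e k l i j := by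
    rw [mmt]
    congr 1
    funext U
    simp only [permM_mulVec, Equiv.Perm.inv_def, Equiv.symm_apply_apply]
  rw [← h2, h]
  rfl

lemma mmt_swap34 (e : Fin d → ℂ) (k l i j : Fin d) :
    mmt μ e k l i j = mmt μ e k l j i := by
  rw [mmt, mmt]; congr 1; funext U; ring

lemma mmt_diag_eq [μ.IsHaarMeasure] (e : Fin d → ℂ) (k k' : Fin d) :
    mmt μ e k k k k = mmt μ e k' k' k' k' := by
  have := mmt_perm μ e (Equiv.swap k k') k' k' k' k'
  rwa [Equiv.swap_apply_right] at this

lemma mmt_off_eq [μ.IsHaarMeasure] (e : Fin d → ℂ) {k l k' l' : Fin d}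
    (hkl : k ≠ l) (hk'l' : k' ≠ l') :
    mmt μ e k l k l = mmt μ e k' l' k' l' := by
  set σ₁ := Equiv.swap k' k with hσ₁
  have hs1 : σ₁ k' = k := Equiv.swap_apply_left k' k
  have h1 : σ₁ l' ≠ k := fun hc => hk'l' (σ₁.injective (by rw [hc, hs1]))
  set σ₂ := Equiv.swap (σ₁ l') l with hσ₂
  have hσk : σ₂ (σ₁ k') = k := by
    rw [hs1]
    exact Equiv.swap_apply_of_ne_of_ne (Ne.symm h1) hkl
  have hσl : σ₂ (σ₁ l') = l := Equiv.swap_apply_left _ _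
  have := mmt_perm μ e (σ₁.trans σ₂) k' l' k' l'
  rwa [Equiv.trans_apply, Equiv.trans_apply, hσk, hσl] at this


/-! ### A real rotation unitary -/

lemma sum_twopoint {M : Type*} [AddCommMonoid M] {p q : Fin d} (hpq : p ≠ q) (x y : M) :
    ∑ b, (if b = p then x else if b = q then y else 0) = x + y := by
  have hpt : ∀ b : Fin d, (if b = p then x else if b = q then y else 0)
      = (if b = p then x else 0) + (if b = q then y else 0) := by
    intro b
    by_cases h1 : b = p <;> by_cases h2 : b = q <;> simp_all
  rw [Finset.sum_congr rfl fun b _ => hpt b, Finset.sum_add_distrib]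
  simp

noncomputable def rr : ℂ := Complex.ofReal (Real.sqrt 2)⁻¹

lemma conj_rr : conj rr = rr := Complex.conj_ofReal _

lemma rr2 : rr * rr = 2⁻¹ := by
  rw [rr, ← Complex.ofReal_mul, ← mul_inv, Real.mul_self_sqrt (by norm_num : (0:ℝ) ≤ 2)]
  norm_num

noncomputable def rotM (p q : Fin d) (hpq : p ≠ q) : Matrix.unitaryGroup (Fin d) ℂ :=
  ⟨Matrix.of fun a b =>
      if a = p then (if b = p then rr else if b = q then rr else 0)
      else if a = q then (if b = p then -rr else if b = q then rr else 0)
      else if a = b then 1 else 0, by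
    rw [Matrix.mem_unitaryGroup_iff]
    ext a c
    rw [Matrix.mul_apply, Matrix.one_apply]
    simp only [Matrix.star_apply, Matrix.of_apply, Complex.star_def]
    by_cases ha1 : a = p
    · by_cases hc1 : c = p
      · simp only [if_pos ha1, if_pos hc1, if_pos (ha1.trans hc1.symm)]
        have hpt : ∀ b : Fin d, (if b = p then rr else if b = q then rr else 0)
            * conj (if b = p then rr else if b = q then rr else 0)
            = (if b = p then rr * conj rr else if b = q then rr * conj rr else 0) := by
          intro b
          by_cases hb1 : b = p <;> by_cases hb2 : b = q <;>
            simp [hb1, hb2, hpq, Ne.symm hpq]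
        rw [Finset.sum_congr rfl fun b _ => hpt b, sum_twopoint hpq, conj_rr]
        linear_combination (2:ℂ) * rr2
      · by_cases hc2 : c = q
        · simp only [if_pos ha1, if_neg hc1, if_pos hc2,
            if_neg (show ¬a = c from fun h => hc1 (h.symm.trans ha1))]
          have hpt : ∀ b : Fin d, (if b = p then rr else if b = q then rr else 0)
              * conj (if b = p then -rr else if b = q then rr else 0)
              = (if b = p then rr * conj (-rr) else if b = q then rr * conj rr else 0) := by
            intro b
            by_cases hb1 : b = p <;> by_cases hb2 : b = q <;>
              simp [hb1, hb2, hpq, Ne.symm hpq]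
          rw [Finset.sum_congr rfl fun b _ => hpt b, sum_twopoint hpq, map_neg, conj_rr]
          ring
        · simp only [if_pos ha1, if_neg hc1, if_neg hc2,
            if_neg (show ¬a = c from fun h => hc1 (h.symm.trans ha1))]
          have hpt : ∀ b : Fin d, (if b = p then rr else if b = q then rr else 0)
              * conj (if c = b then (1:ℂ) else 0) = 0 := by
            intro b
            by_cases hb1 : b = p <;> by_cases hb2 : b = q <;>
              simp [hb1, hb2, hc1, hc2]
          rw [Finset.sum_congr rfl fun b _ => hpt b, Finset.sum_const_zero]
    · by_cases ha2 : a = q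
      · by_cases hc1 : c = p
        · simp only [if_neg ha1, if_pos ha2, if_pos hc1,
            if_neg (show ¬a = c from fun h => ha1 (h.trans hc1))]
          have hpt : ∀ b : Fin d, (if b = p then -rr else if b = q then rr else 0)
              * conj (if b = p then rr else if b = q then rr else 0)
              = (if b = p then -rr * conj rr else if b = q then rr * conj rr else 0) := by
            intro b
            by_cases hb1 : b = p <;> by_cases hb2 : b = q <;>
              simp [hb1, hb2, hpq, Ne.symm hpq]
          rw [Finset.sum_congr rfl fun b _ => hpt b, sum_twopoint hpq, conj_rr]
          ring
        · by_cases hc2 : c = q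
          · simp only [if_neg ha1, if_pos ha2, if_neg hc1, if_pos hc2,
              if_pos (ha2.trans hc2.symm)]
            have hpt : ∀ b : Fin d, (if b = p then -rr else if b = q then rr else 0)
                * conj (if b = p then -rr else if b = q then rr else 0)
                = (if b = p then -rr * conj (-rr) else if b = q then rr * conj rr else 0) := by
              intro b
              by_cases hb1 : b = p <;> by_cases hb2 : b = q <;>
                simp [hb1, hb2, hpq, Ne.symm hpq]
            rw [Finset.sum_congr rfl fun b _ => hpt b, sum_twopoint hpq, map_neg, conj_rr]
            linear_combination (2:ℂ) * rr2
          · simp only [if_neg ha1, if_pos ha2, if_neg hc1, if_neg hc2,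
              if_neg (show ¬a = c from fun h => hc2 (h.symm.trans ha2))]
            have hpt : ∀ b : Fin d, (if b = p then -rr else if b = q then rr else 0)
                * conj (if c = b then (1:ℂ) else 0) = 0 := by
              intro b
              by_cases hb1 : b = p <;> by_cases hb2 : b = q <;>
                simp [hb1, hb2, hc1, hc2]
            rw [Finset.sum_congr rfl fun b _ => hpt b, Finset.sum_const_zero]
      · by_cases hc1 : c = p
        · simp only [if_neg ha1, if_neg ha2, if_pos hc1,
            if_neg (show ¬a = c from fun h => ha1 (h.trans hc1))]
          have hpt : ∀ b : Fin d, (if a = b then (1:ℂ) else 0)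
              * conj (if b = p then rr else if b = q then rr else 0) = 0 := by
            intro b
            by_cases hb1 : b = p <;> by_cases hb2 : b = q <;>
              simp [hb1, hb2, ha1, ha2]
          rw [Finset.sum_congr rfl fun b _ => hpt b, Finset.sum_const_zero]
        · by_cases hc2 : c = q
          · simp only [if_neg ha1, if_neg ha2, if_neg hc1, if_pos hc2,
              if_neg (show ¬a = c from fun h => ha2 (h.trans hc2))]
            have hpt : ∀ b : Fin d, (if a = b then (1:ℂ) else 0)
                * conj (if b = p then -rr else if b = q then rr else 0) = 0 := by
              intro b
              by_cases hb1 : b = p <;> by_cases hb2 : b = q <;>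
                simp [hb1, hb2, ha1, ha2]
            rw [Finset.sum_congr rfl fun b _ => hpt b, Finset.sum_const_zero]
          · simp only [if_neg ha1, if_neg ha2, if_neg hc1, if_neg hc2]
            have hpt : ∀ b : Fin d, (if a = b then (1:ℂ) else 0)
                * conj (if c = b then (1:ℂ) else 0)
                = (if b = a then (if c = a then (1:ℂ) else 0) else 0) := by
              intro b
              by_cases hab : a = b
              · subst hab
                by_cases hca : c = a <;> simp [hca]
              · have hba : ¬b = a := fun h => hab h.symm
                simp [hab, hba]
            rw [Finset.sum_congr rfl fun b _ => hpt b, Finset.sum_ite_eq' Finset.univ a]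
            simp [eq_comm]⟩

lemma rotM_mulVec_p (p q : Fin d) (hpq : p ≠ q) (v : Fin d → ℂ) :
    ((rotM p q hpq : Matrix (Fin d) (Fin d) ℂ) *ᵥ v) p = rr * v p + rr * v q := by
  show ∑ b, (Matrix.of fun a b =>
      if a = p then (if b = p then rr else if b = q then rr else 0)
      else if a = q then (if b = p then -rr else if b = q then rr else 0)
      else if a = b then 1 else 0) p b * v b = _
  simp only [Matrix.of_apply, eq_self_iff_true, if_true]
  have hpt : ∀ b : Fin d, (if b = p then rr else if b = q then rr else 0) * v b
      = (if b = p then rr * v p else if b = q then rr * v q else 0) := by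
    intro b
    by_cases hb1 : b = p <;> by_cases hb2 : b = q <;> simp [hb1, hb2, hpq, Ne.symm hpq]
  rw [Finset.sum_congr rfl fun b _ => hpt b, sum_twopoint hpq]

/-! ### The key relations between the moments -/

lemma mmt_rot [μ.IsHaarMeasure] [IsProbabilityMeasure μ] (e : Fin d → ℂ) (p q : Fin d)
    (hpq : p ≠ q) : mmt μ e p p p p = 2 * mmt μ e p q p q := by
  have hr4 : rr * rr * (rr * rr) = (4:ℂ)⁻¹ := by rw [rr2]; norm_num
  have heq : mmt μ e p p p p
      = rr * rr * (rr * rr) * ∑ t ∈ (({p,q} : Finset (Fin d)) ×ˢ ({p,q} : Finset (Fin d))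
            ×ˢ ({p,q} : Finset (Fin d)) ×ˢ ({p,q} : Finset (Fin d))),
          mmt μ e t.1 t.2.1 t.2.2.1 t.2.2.2 := by
    have hexp : ∀ U : Matrix.unitaryGroup (Fin d) ℂ,
        ((rotM p q hpq : Matrix (Fin d) (Fin d) ℂ) *ᵥ xi e U) p
          * ((rotM p q hpq : Matrix (Fin d) (Fin d) ℂ) *ᵥ xi e U) p
          * conj (((rotM p q hpq : Matrix (Fin d) (Fin d) ℂ) *ᵥ xi e U) p)
          * conj (((rotM p q hpq : Matrix (Fin d) (Fin d) ℂ) *ᵥ xi e U) p)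
        = rr * rr * (rr * rr) * ∑ t ∈ (({p,q} : Finset (Fin d)) ×ˢ ({p,q} : Finset (Fin d))
            ×ˢ ({p,q} : Finset (Fin d)) ×ˢ ({p,q} : Finset (Fin d))),
          xi e U t.1 * xi e U t.2.1 * conj (xi e U t.2.2.1) * conj (xi e U t.2.2.2) := by
      intro U
      rw [rotM_mulVec_p p q hpq]
      simp only [map_add, _root_.map_mul, conj_rr, Finset.sum_product, Finset.sum_pair hpq]
      ring
    calc mmt μ e p p p p
        = ∫ U, (fun v : Fin d → ℂ => v p * v p * conj (v p) * conj (v p))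
            ((rotM p q hpq : Matrix (Fin d) (Fin d) ℂ) *ᵥ xi e U) ∂μ :=
          (integral_comp_mulVec μ e (fun v : Fin d → ℂ => v p * v p * conj (v p) * conj (v p))
            (rotM p q hpq)).symm
      _ = ∫ U, rr * rr * (rr * rr) * ∑ t ∈ (({p,q} : Finset (Fin d)) ×ˢ ({p,q} : Finset (Fin d))
            ×ˢ ({p,q} : Finset (Fin d)) ×ˢ ({p,q} : Finset (Fin d))),
          xi e U t.1 * xi e U t.2.1 * conj (xi e U t.2.2.1) * conj (xi e U t.2.2.2) ∂μ := by
          congr 1; funext U; exact hexp U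
      _ = rr * rr * (rr * rr) * ∑ t ∈ (({p,q} : Finset (Fin d)) ×ˢ ({p,q} : Finset (Fin d))
            ×ˢ ({p,q} : Finset (Fin d)) ×ˢ ({p,q} : Finset (Fin d))),
          ∫ U, xi e U t.1 * xi e U t.2.1 * conj (xi e U t.2.2.1) * conj (xi e U t.2.2.2) ∂μ := by
          rw [integral_const_mul, integral_finset_sum _
            (fun t _ => integrable_mono μ e t.1 t.2.1 t.2.2.1 t.2.2.2)]
      _ = _ := rfl
  rw [Finset.sum_product, Finset.sum_pair hpq] at heq
  simp only [Finset.sum_product, Finset.sum_pair hpq] at heq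
  rw [mmt_zero μ e p p p q (by simp [hpq, Ne.symm hpq]), mmt_zero μ e p p q p (by simp [hpq, Ne.symm hpq]),
    mmt_zero μ e p p q q (by simp [hpq, Ne.symm hpq]), mmt_zero μ e p q p p (by simp [hpq, Ne.symm hpq]),
    mmt_zero μ e p q q q (by simp [hpq, Ne.symm hpq]), mmt_zero μ e q p p p (by simp [hpq, Ne.symm hpq]),
    mmt_zero μ e q p q q (by simp [hpq, Ne.symm hpq]), mmt_zero μ e q q p q (by simp [hpq, Ne.symm hpq]),
    mmt_zero μ e q q q p (by simp [hpq, Ne.symm hpq]), mmt_zero μ e q q p p (by simp [hpq, Ne.symm hpq]),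
    show mmt μ e p q q p = mmt μ e p q p q from (mmt_swap34 μ e p q p q).symm ▸ mmt_swap34 μ e p q q p,
    show mmt μ e q p q p = mmt μ e p q p q from mmt_off_eq μ e (Ne.symm hpq) hpq,
    show mmt μ e q p p q = mmt μ e p q p q from
      (mmt_swap34 μ e q p p q).trans (mmt_off_eq μ e (Ne.symm hpq) hpq),
    show mmt μ e q q q q = mmt μ e p p p p from mmt_diag_eq μ e q p] at heq
  linear_combination 2 * heq + (4 * mmt μ e p p p p + 8 * mmt μ e p q p q) * hr4

lemma xi_norm (e : Fin d → ℂ) (he : ∑ i, ‖e i‖ ^ 2 = 1) (U : Matrix.unitaryGroup (Fin d) ℂ) :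
    ∑ k, conj (xi e U k) * xi e U k = 1 := by
  have hUU : ((U : Matrix (Fin d) (Fin d) ℂ))ᴴ * (U : Matrix (Fin d) (Fin d) ℂ) = 1 := by
    have := Matrix.mem_unitaryGroup_iff'.mp U.2
    rwa [Matrix.star_eq_conjTranspose] at this
  have h1 : star (xi e U) ⬝ᵥ xi e U = star e ⬝ᵥ e := by
    rw [xi, Matrix.star_mulVec, Matrix.dotProduct_mulVec, Matrix.vecMul_vecMul, hUU,
      Matrix.vecMul_one]
  have h2 : star (xi e U) ⬝ᵥ xi e U = ∑ k, conj (xi e U k) * xi e U k := by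
    simp [dotProduct, Pi.star_apply, Complex.star_def]
  have h3 : star e ⬝ᵥ e = ((∑ i, ‖e i‖ ^ 2 : ℝ) : ℂ) := by
    simp only [dotProduct, Pi.star_apply, Complex.star_def]
    push_cast
    exact Finset.sum_congr rfl fun i _ => RCLike.conj_mul (e i)
  rw [← h2, h1, h3, he]
  norm_num

lemma mmt_sum_eq_one [μ.IsHaarMeasure] [IsProbabilityMeasure μ] (e : Fin d → ℂ)
    (he : ∑ i, ‖e i‖ ^ 2 = 1) :
    ∑ t : Fin d × Fin d, mmt μ e t.1 t.2 t.1 t.2 = 1 := by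
  have hpt : ∀ U : Matrix.unitaryGroup (Fin d) ℂ,
      ∑ t : Fin d × Fin d, xi e U t.1 * xi e U t.2 * conj (xi e U t.1) * conj (xi e U t.2)
        = 1 := by
    intro U
    rw [Fintype.sum_prod_type]
    have hk : ∀ k, ∑ l, xi e U k * xi e U l * conj (xi e U k) * conj (xi e U l)
        = (conj (xi e U k) * xi e U k) * ∑ l, conj (xi e U l) * xi e U l := by
      intro k
      rw [Finset.mul_sum]
      exact Finset.sum_congr rfl fun l _ => by ring
    simp_rw [hk, xi_norm e he U, mul_one]
    exact xi_norm e he U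
  have h1 : ∑ t : Fin d × Fin d, mmt μ e t.1 t.2 t.1 t.2
      = ∫ U, ∑ t : Fin d × Fin d,
          xi e U t.1 * xi e U t.2 * conj (xi e U t.1) * conj (xi e U t.2) ∂μ :=
    (integral_finset_sum _ (fun t _ => integrable_mono μ e t.1 t.2 t.1 t.2)).symm
  rw [h1]
  have h2 : (∫ U, ∑ t : Fin d × Fin d,
      xi e U t.1 * xi e U t.2 * conj (xi e U t.1) * conj (xi e U t.2) ∂μ)
      = ∫ _U, (1:ℂ) ∂μ := by
    congr 1; funext U; exact hpt U
  rw [h2]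
  simp

lemma mmt_off_val [μ.IsHaarMeasure] [IsProbabilityMeasure μ] (e : Fin d → ℂ)
    (he : ∑ i, ‖e i‖ ^ 2 = 1) {p q : Fin d} (hpq : p ≠ q) :
    mmt μ e p q p q = 1 / ((d:ℂ) * ((d:ℂ) + 1)) := by
  have hAB : mmt μ e p p p p = 2 * mmt μ e p q p q := mmt_rot μ e p q hpq
  have hsum := mmt_sum_eq_one μ e he
  have hval : ∀ t : Fin d × Fin d, mmt μ e t.1 t.2 t.1 t.2
      = if t.2 = t.1 then mmt μ e p p p p else mmt μ e p q p q := by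
    intro t
    by_cases h : t.2 = t.1
    · rw [if_pos h, h]
      exact mmt_diag_eq μ e t.1 p
    · rw [if_neg h]
      exact mmt_off_eq μ e (fun hh => h hh.symm) hpq
  rw [Finset.sum_congr rfl fun t _ => hval t, Fintype.sum_prod_type] at hsum
  have hrow : ∀ k : Fin d, ∑ l, (if l = k then mmt μ e p p p p else mmt μ e p q p q)
      = mmt μ e p p p p + ((d:ℂ) - 1) * mmt μ e p q p q := by
    intro k
    have hpt : ∀ l : Fin d, (if l = k then mmt μ e p p p p else mmt μ e p q p q)
        = mmt μ e p q p q + (if l = k then mmt μ e p p p p - mmt μ e p q p q else 0) := by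
      intro l
      by_cases h : l = k <;> simp [h]
    rw [Finset.sum_congr rfl fun l _ => hpt l, Finset.sum_add_distrib, Finset.sum_const,
      Finset.sum_ite_eq' Finset.univ k, Finset.card_univ, Fintype.card_fin]
    simp only [Finset.mem_univ, if_true, nsmul_eq_mul]
    ring
  rw [Finset.sum_congr rfl fun k _ => hrow k, Finset.sum_const, Finset.card_univ,
    Fintype.card_fin, nsmul_eq_mul] at hsum
  have hd0 : (d:ℂ) ≠ 0 := Nat.cast_ne_zero.mpr p.pos.ne'
  have hd1 : ((d:ℂ) + 1) ≠ 0 := by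
    have : ((d + 1 : ℕ) : ℂ) ≠ 0 := Nat.cast_ne_zero.mpr (Nat.succ_ne_zero d)
    push_cast at this
    exact this
  rw [eq_div_iff (mul_ne_zero hd0 hd1)]
  linear_combination hsum - (d:ℂ) * hAB

lemma mmt_diag_val [μ.IsHaarMeasure] [IsProbabilityMeasure μ] (e : Fin d → ℂ)
    (he : ∑ i, ‖e i‖ ^ 2 = 1) (k : Fin d) :
    mmt μ e k k k k = 2 / ((d:ℂ) * ((d:ℂ) + 1)) := by
  by_cases hd2 : 2 ≤ d
  · obtain ⟨q, hq⟩ := Fintype.exists_ne_of_one_lt_card (by simp; omega) k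
    rw [mmt_rot μ e k q (Ne.symm hq), mmt_off_val μ e he (Ne.symm hq)]
    ring
  · have hd1 : d = 1 := by have := k.pos; omega
    subst hd1
    have hsum := mmt_sum_eq_one μ e he
    rw [Fintype.sum_prod_type] at hsum
    simp only [Fin.sum_univ_one] at hsum
    have hk0 : k = 0 := Subsingleton.elim _ _
    rw [hk0, hsum]
    norm_num

lemma mmt_formula [μ.IsHaarMeasure] [IsProbabilityMeasure μ] (e : Fin d → ℂ)
    (he : ∑ i, ‖e i‖ ^ 2 = 1) (k l i j : Fin d) :
    mmt μ e k l i j = (1 / ((d:ℂ) * ((d:ℂ) + 1)))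
      * ((if k = i then 1 else 0) * (if l = j then 1 else 0)
        + (if k = j then 1 else 0) * (if l = i then 1 else 0)) := by
  by_cases h1 : k = i ∧ l = j
  · obtain ⟨hki, hlj⟩ := h1
    subst hki; subst hlj
    by_cases h2 : k = l
    · subst h2
      rw [mmt_diag_val μ e he k]
      simp only [eq_self_iff_true, if_true]
      ring
    · rw [mmt_off_val μ e he h2]
      simp only [eq_self_iff_true, if_true, if_neg h2, if_neg (fun h => h2 h.symm : ¬l = k)]
      ring
  · by_cases h2 : k = j ∧ l = i
    · obtain ⟨hkj, hli⟩ := h2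
      subst hkj; subst hli
      have hkl : k ≠ l := fun h => h1 ⟨h, h.symm⟩
      rw [mmt_swap34 μ e k l l k, mmt_off_val μ e he hkl]
      simp only [eq_self_iff_true, if_true, if_neg hkl, if_neg (fun h => hkl h.symm : ¬l = k)]
      ring
    · rw [mmt_zero μ e k l i j (by tauto)]
      by_cases hki : k = i <;> by_cases hlj : l = j <;> by_cases hkj : k = j <;>
        by_cases hli : l = i <;> simp_all

/-! ### Evaluating the trace sums -/

lemma quad_eval (O : Matrix (Fin d) (Fin d) ℂ) (c : ℂ) :
    ∑ x : Fin d × Fin d, ∑ y : Fin d × Fin d, O x.1 x.2 * O y.1 y.2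
      * (c * ((if x.2 = x.1 then (1:ℂ) else 0) * (if y.2 = y.1 then (1:ℂ) else 0)
        + (if x.2 = y.1 then (1:ℂ) else 0) * (if y.2 = x.1 then (1:ℂ) else 0)))
    = c * (O.trace * O.trace + (O * O).trace) := by
  have e1 : ∑ x : Fin d × Fin d, O x.1 x.2 * (if x.2 = x.1 then (1:ℂ) else 0) = O.trace := by
    rw [Fintype.sum_prod_type]
    simp [mul_ite, mul_one, mul_zero, Finset.sum_ite_eq', Matrix.trace, Matrix.diag]
  have e2 : ∑ x : Fin d × Fin d, ∑ y : Fin d × Fin d,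
      (O x.1 x.2 * (if x.2 = y.1 then (1:ℂ) else 0))
        * (O y.1 y.2 * (if y.2 = x.1 then (1:ℂ) else 0)) = (O * O).trace := by
    rw [Fintype.sum_prod_type]
    simp only [Fintype.sum_prod_type]
    simp [mul_ite, mul_one, mul_zero, ite_mul, zero_mul, Finset.sum_ite_eq',
      Matrix.trace, Matrix.diag, Matrix.mul_apply]
  have hsplit : ∀ x y : Fin d × Fin d, O x.1 x.2 * O y.1 y.2
      * (c * ((if x.2 = x.1 then (1:ℂ) else 0) * (if y.2 = y.1 then (1:ℂ) else 0)
        + (if x.2 = y.1 then (1:ℂ) else 0) * (if y.2 = x.1 then (1:ℂ) else 0)))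
      = c * ((O x.1 x.2 * (if x.2 = x.1 then (1:ℂ) else 0))
            * (O y.1 y.2 * (if y.2 = y.1 then (1:ℂ) else 0)))
        + c * ((O x.1 x.2 * (if x.2 = y.1 then (1:ℂ) else 0))
            * (O y.1 y.2 * (if y.2 = x.1 then (1:ℂ) else 0))) := by
    intro x y; ring
  rw [Finset.sum_congr rfl fun x _ => Finset.sum_congr rfl fun y _ => hsplit x y]
  have hdist : ∀ x : Fin d × Fin d, ∑ y : Fin d × Fin d,
      (c * ((O x.1 x.2 * (if x.2 = x.1 then (1:ℂ) else 0))
            * (O y.1 y.2 * (if y.2 = y.1 then (1:ℂ) else 0)))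
        + c * ((O x.1 x.2 * (if x.2 = y.1 then (1:ℂ) else 0))
            * (O y.1 y.2 * (if y.2 = x.1 then (1:ℂ) else 0))))
      = (∑ y : Fin d × Fin d, c * ((O x.1 x.2 * (if x.2 = x.1 then (1:ℂ) else 0))
            * (O y.1 y.2 * (if y.2 = y.1 then (1:ℂ) else 0))))
        + ∑ y : Fin d × Fin d, c * ((O x.1 x.2 * (if x.2 = y.1 then (1:ℂ) else 0))
            * (O y.1 y.2 * (if y.2 = x.1 then (1:ℂ) else 0))) := fun x =>
    Finset.sum_add_distrib
  rw [Finset.sum_congr rfl fun x _ => hdist x, Finset.sum_add_distrib]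
  have hT1 : ∑ x : Fin d × Fin d, ∑ y : Fin d × Fin d,
      c * ((O x.1 x.2 * (if x.2 = x.1 then (1:ℂ) else 0))
        * (O y.1 y.2 * (if y.2 = y.1 then (1:ℂ) else 0)))
      = c * (O.trace * O.trace) := by
    calc ∑ x : Fin d × Fin d, ∑ y : Fin d × Fin d,
        c * ((O x.1 x.2 * (if x.2 = x.1 then (1:ℂ) else 0))
          * (O y.1 y.2 * (if y.2 = y.1 then (1:ℂ) else 0)))
        = c * ∑ x : Fin d × Fin d, ∑ y : Fin d × Fin d,
            ((O x.1 x.2 * (if x.2 = x.1 then (1:ℂ) else 0))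
              * (O y.1 y.2 * (if y.2 = y.1 then (1:ℂ) else 0))) := by
          rw [Finset.mul_sum]
          exact Finset.sum_congr rfl fun x _ => by rw [Finset.mul_sum]
      _ = c * ((∑ x : Fin d × Fin d, O x.1 x.2 * (if x.2 = x.1 then (1:ℂ) else 0))
            * (∑ y : Fin d × Fin d, O y.1 y.2 * (if y.2 = y.1 then (1:ℂ) else 0))) := by
          rw [Finset.sum_mul_sum]
      _ = c * (O.trace * O.trace) := by rw [e1]
  have hT2 : ∑ x : Fin d × Fin d, ∑ y : Fin d × Fin d,
      c * ((O x.1 x.2 * (if x.2 = y.1 then (1:ℂ) else 0))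
        * (O y.1 y.2 * (if y.2 = x.1 then (1:ℂ) else 0)))
      = c * (O * O).trace := by
    calc ∑ x : Fin d × Fin d, ∑ y : Fin d × Fin d,
        c * ((O x.1 x.2 * (if x.2 = y.1 then (1:ℂ) else 0))
          * (O y.1 y.2 * (if y.2 = x.1 then (1:ℂ) else 0)))
        = c * ∑ x : Fin d × Fin d, ∑ y : Fin d × Fin d,
            ((O x.1 x.2 * (if x.2 = y.1 then (1:ℂ) else 0))
              * (O y.1 y.2 * (if y.2 = x.1 then (1:ℂ) else 0))) := by
          rw [Finset.mul_sum]
          exact Finset.sum_congr rfl fun x _ => by rw [Finset.mul_sum]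
      _ = c * (O * O).trace := by rw [e2]
  rw [hT1, hT2]
  ring

end Stmt12Aux

open Stmt12Aux

/-- Second-moment identity for Haar-random states (Appendix C of the paper):
`E[⟨ξ, O ξ⟩²] = ((Tr O)² + Tr(O²)) / (d(d+1))` for Hermitian `O`, where
`ξ = U *ᵥ e` for Haar-random `U ∈ U(d)`. -/
theorem stmt12 (d : ℕ) (hd : 1 ≤ d)
    [MeasurableSpace (Matrix.unitaryGroup (Fin d) ℂ)]
    [BorelSpace (Matrix.unitaryGroup (Fin d) ℂ)]
    (μ : Measure (Matrix.unitaryGroup (Fin d) ℂ))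
    [μ.IsHaarMeasure] [IsProbabilityMeasure μ]
    (e : Fin d → ℂ) (he : ∑ i, ‖e i‖ ^ 2 = 1)
    (O : Matrix (Fin d) (Fin d) ℂ) (hO : O.IsHermitian) :
    ∫ U : Matrix.unitaryGroup (Fin d) ℂ,
        ((cip ((U : Matrix (Fin d) (Fin d) ℂ) *ᵥ e)
          (O *ᵥ ((U : Matrix (Fin d) (Fin d) ℂ) *ᵥ e))).re) ^ 2 ∂μ
      = ((O.trace.re) ^ 2 + (O * O).trace.re) / ((d : ℝ) * ((d : ℝ) + 1)) := by
  have hOc : ∀ i k, conj (O i k) = O k i := by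
    intro i k
    have h := congrFun (congrFun hO k) i
    rwa [Matrix.conjTranspose_apply] at h
  have hg : ∀ U : Matrix.unitaryGroup (Fin d) ℂ,
      cip (xi e U) (O *ᵥ xi e U)
        = ∑ x : Fin d × Fin d, O x.1 x.2 * (xi e U x.2 * conj (xi e U x.1)) := by
    intro U
    rw [Fintype.sum_prod_type]
    simp only [cip]
    refine Finset.sum_congr rfl fun i _ => ?_
    have hOv : (O *ᵥ xi e U) i = ∑ k, O i k * xi e U k := rfl
    rw [hOv, Finset.mul_sum]
    exact Finset.sum_congr rfl fun k _ => by ring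
  have hgreal : ∀ U : Matrix.unitaryGroup (Fin d) ℂ,
      conj (cip (xi e U) (O *ᵥ xi e U)) = cip (xi e U) (O *ᵥ xi e U) := by
    intro U
    rw [hg U, map_sum]
    calc ∑ x : Fin d × Fin d, conj (O x.1 x.2 * (xi e U x.2 * conj (xi e U x.1)))
        = ∑ x : Fin d × Fin d, O x.2 x.1 * (xi e U x.1 * conj (xi e U x.2)) := by
          refine Finset.sum_congr rfl fun x _ => ?_
          rw [_root_.map_mul, _root_.map_mul, Complex.conj_conj, hOc x.1 x.2]
          ring
      _ = ∑ x : Fin d × Fin d, O x.1 x.2 * (xi e U x.2 * conj (xi e U x.1)) :=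
          Fintype.sum_equiv (Equiv.prodComm (Fin d) (Fin d)) _ _ (fun x => rfl)
  have him : ∀ U : Matrix.unitaryGroup (Fin d) ℂ,
      (cip (xi e U) (O *ᵥ xi e U)).im = 0 := by
    intro U
    have h := hgreal U
    rw [Complex.conj_eq_iff_im] at h
    exact h
  have hsq : ∀ U : Matrix.unitaryGroup (Fin d) ℂ,
      ((cip (xi e U) (O *ᵥ xi e U)).re) ^ 2 = ((cip (xi e U) (O *ᵥ xi e U)) ^ 2).re := by
    intro U
    rw [pow_two, pow_two, Complex.mul_re, him U]
    ring
  have hmono_eq : ∀ U : Matrix.unitaryGroup (Fin d) ℂ,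
      (cip (xi e U) (O *ᵥ xi e U)) ^ 2
        = ∑ x : Fin d × Fin d, ∑ y : Fin d × Fin d, (O x.1 x.2 * O y.1 y.2)
            * (xi e U x.2 * xi e U y.2 * conj (xi e U x.1) * conj (xi e U y.1)) := by
    intro U
    rw [pow_two, hg U, Finset.sum_mul_sum]
    exact Finset.sum_congr rfl fun x _ => Finset.sum_congr rfl fun y _ => by ring
  have hint2 : Integrable (fun U => (cip (xi e U) (O *ᵥ xi e U)) ^ 2) μ := by
    rw [show (fun U => (cip (xi e U) (O *ᵥ xi e U)) ^ 2)
        = fun U => ∑ x : Fin d × Fin d, ∑ y : Fin d × Fin d, (O x.1 x.2 * O y.1 y.2)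
            * (xi e U x.2 * xi e U y.2 * conj (xi e U x.1) * conj (xi e U y.1)) from
      funext hmono_eq]
    exact integrable_finset_sum _ fun x _ => integrable_finset_sum _ fun y _ =>
      (integrable_mono μ e x.2 y.2 x.1 y.1).const_mul _
  have hIg : ∫ U, (cip (xi e U) (O *ᵥ xi e U)) ^ 2 ∂μ
      = (1 / ((d:ℂ) * ((d:ℂ) + 1))) * (O.trace * O.trace + (O * O).trace) := by
    calc ∫ U, (cip (xi e U) (O *ᵥ xi e U)) ^ 2 ∂μ
        = ∫ U, ∑ x : Fin d × Fin d, ∑ y : Fin d × Fin d, (O x.1 x.2 * O y.1 y.2)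
            * (xi e U x.2 * xi e U y.2 * conj (xi e U x.1) * conj (xi e U y.1)) ∂μ := by
          congr 1; funext U; exact hmono_eq U
      _ = ∑ x : Fin d × Fin d, ∫ U, ∑ y : Fin d × Fin d, (O x.1 x.2 * O y.1 y.2)
            * (xi e U x.2 * xi e U y.2 * conj (xi e U x.1) * conj (xi e U y.1)) ∂μ :=
          integral_finset_sum _ fun x _ => integrable_finset_sum _ fun y _ =>
            (integrable_mono μ e x.2 y.2 x.1 y.1).const_mul _
      _ = ∑ x : Fin d × Fin d, ∑ y : Fin d × Fin d, ∫ U, (O x.1 x.2 * O y.1 y.2)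
            * (xi e U x.2 * xi e U y.2 * conj (xi e U x.1) * conj (xi e U y.1)) ∂μ :=
          Finset.sum_congr rfl fun x _ => integral_finset_sum _ fun y _ =>
            (integrable_mono μ e x.2 y.2 x.1 y.1).const_mul _
      _ = ∑ x : Fin d × Fin d, ∑ y : Fin d × Fin d, (O x.1 x.2 * O y.1 y.2)
            * mmt μ e x.2 y.2 x.1 y.1 :=
          Finset.sum_congr rfl fun x _ => Finset.sum_congr rfl fun y _ => by
            rw [integral_const_mul]; rfl
      _ = ∑ x : Fin d × Fin d, ∑ y : Fin d × Fin d, O x.1 x.2 * O y.1 y.2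
            * ((1 / ((d:ℂ) * ((d:ℂ) + 1)))
              * ((if x.2 = x.1 then (1:ℂ) else 0) * (if y.2 = y.1 then (1:ℂ) else 0)
                + (if x.2 = y.1 then (1:ℂ) else 0) * (if y.2 = x.1 then (1:ℂ) else 0))) :=
          Finset.sum_congr rfl fun x _ => Finset.sum_congr rfl fun y _ => by
            rw [mmt_formula μ e he x.2 y.2 x.1 y.1]
      _ = (1 / ((d:ℂ) * ((d:ℂ) + 1))) * (O.trace * O.trace + (O * O).trace) :=
          quad_eval O _
  have htr : ((O.trace.re : ℝ) : ℂ) = O.trace := by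
    apply Complex.conj_eq_iff_re.mp
    rw [Matrix.trace, map_sum]
    exact Finset.sum_congr rfl fun i _ => hOc i i
  have htr2 : (((O * O).trace.re : ℝ) : ℂ) = (O * O).trace := by
    apply Complex.conj_eq_iff_re.mp
    rw [Matrix.trace, map_sum]
    refine Finset.sum_congr rfl fun i _ => ?_
    have hdiag : (O * O).diag i = ∑ k, O i k * O k i := by
      simp [Matrix.diag, Matrix.mul_apply]
    rw [hdiag, map_sum]
    rw [show ∑ k, conj (O i k * O k i) = ∑ k, O i k * O k i from
      Finset.sum_congr rfl fun k _ => by rw [_root_.map_mul, hOc, hOc]; ring]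
  calc ∫ U : Matrix.unitaryGroup (Fin d) ℂ,
        ((cip ((U : Matrix (Fin d) (Fin d) ℂ) *ᵥ e)
          (O *ᵥ ((U : Matrix (Fin d) (Fin d) ℂ) *ᵥ e))).re) ^ 2 ∂μ
      = ∫ U, ((cip (xi e U) (O *ᵥ xi e U)) ^ 2).re ∂μ := by
        congr 1; funext U; exact hsq U
    _ = (∫ U, (cip (xi e U) (O *ᵥ xi e U)) ^ 2 ∂μ).re := by
        have h := integral_re (𝕜 := ℂ) hint2
        simp only [RCLike.re_to_complex] at h
        exact h
    _ = ((1 / ((d:ℂ) * ((d:ℂ) + 1))) * (O.trace * O.trace + (O * O).trace)).re := by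
        rw [hIg]
    _ = ((O.trace.re) ^ 2 + (O * O).trace.re) / ((d : ℝ) * ((d : ℝ) + 1)) := by
        rw [← htr, ← htr2]
        rw [show (1 / ((d:ℂ) * ((d:ℂ) + 1)))
            * (((O.trace.re : ℝ) : ℂ) * ((O.trace.re : ℝ) : ℂ) + (((O * O).trace.re : ℝ) : ℂ))
          = ((((O.trace.re) ^ 2 + (O * O).trace.re) / ((d : ℝ) * ((d : ℝ) + 1)) : ℝ) : ℂ) from by
          push_cast
          ring]
        exact Complex.ofReal_re _
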